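/- Every surjective 1-Lipschitz map f : X → X from a compact metric space X to itself is an isometry. -/
import Mathlib

open Function

/-- For a surjective `1`-Lipschitz self-map of a compact metric space, every point is
almost periodic in the backward sense: it has preimages under some iterate arbitrarily close. -/
theorem aux_backward_recurrent {Y : Type*} [MetricSpace Y] [CompactSpace Y]
    (g : Y → Y) (hg : LipschitzWith 1 g) (hs : Function.Surjective g)
    (y₀ : Y) {ε : ℝ} (hε : 0 < ε) :
    ∃ n ≥ 1, ∃ z, g^[n] z = y₀ ∧ dist z y₀ < ε := by
  -- build a backward orbit
  choose inv hinv using hs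
  set y : ℕ → Y := fun k => inv^[k] y₀ with hy
  have hgy : ∀ k, g (y (k + 1)) = y k := by
    intro k
    simp [hy, Function.iterate_succ_apply', hinv]
  have hiter : ∀ k m, g^[k] (y (k + m)) = y m := by
    intro k
    induction k with
    | zero => intro m; simp
    | succ k ih =>
      intro m
      have : k + 1 + m = k + (m + 1) := by ring
      rw [this, Function.iterate_succ_apply', ih (m + 1), hgy]
  -- find two close points in the orbit
  obtain ⟨p, -, φ, hφ, hconv⟩ := isCompact_univ.tendsto_subseq (x := y) (fun n => Set.mem_univ _)
  have hc : ∃ k l, k < l ∧ dist (y k) (y l) < ε := by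
    obtain ⟨N, hN⟩ := Metric.tendsto_atTop.1 hconv (ε / 2) (by linarith)
    refine ⟨φ N, φ (N + 1), hφ (by omega), ?_⟩
    calc dist (y (φ N)) (y (φ (N + 1)))
        ≤ dist (y (φ N)) p + dist (y (φ (N + 1))) p := dist_triangle_right _ _ _
      _ < ε / 2 + ε / 2 := add_lt_add (hN N le_rfl) (hN (N + 1) (by omega))
      _ = ε := by ring
  obtain ⟨k, l, hkl, hd⟩ := hc
  refine ⟨l - k, by omega, y (l - k), ?_, ?_⟩
  · have := hiter (l - k) 0
    simpa [hy] using this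
  · have h0 : g^[k] (y (k + 0)) = y 0 := hiter k 0
    have h1 : g^[k] (y (k + (l - k))) = y (l - k) := hiter k (l - k)
    have hle : dist (g^[k] (y l)) (g^[k] (y k)) ≤ dist (y l) (y k) := by
      simpa using (hg.iterate k).dist_le_mul (y l) (y k)
    rw [Nat.add_sub_cancel' hkl.le] at h1
    simp only [Nat.add_zero] at h0
    rw [h0, h1] at hle
    calc dist (y (l - k)) (y 0) ≤ dist (y l) (y k) := hle
      _ = dist (y k) (y l) := dist_comm _ _
      _ < ε := hd

/-- Every surjective `1`-Lipschitz self-map of a compact metric space is an isometry. -/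
theorem stmt_7 {X : Type*} [MetricSpace X] [CompactSpace X]
    (f : X → X) (hf : LipschitzWith 1 f) (hsurj : Function.Surjective f) :
    Isometry f := by
  apply Isometry.of_dist_eq
  intro x y
  refine le_antisymm (by simpa using hf.dist_le_mul x y) ?_
  -- work in the product space
  have hg : LipschitzWith 1 (Prod.map f f : X × X → X × X) := by
    apply LipschitzWith.of_dist_le_mul
    intro p q
    simp only [Prod.dist_eq, Prod.map_fst, Prod.map_snd, NNReal.coe_one, one_mul]
    exact max_le_max (hf.dist_le_mul _ _ |>.trans (by simp))
      (hf.dist_le_mul _ _ |>.trans (by simp))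
  have hgs : Function.Surjective (Prod.map f f : X × X → X × X) := hsurj.prodMap hsurj
  refine le_of_forall_pos_le_add ?_
  intro ε hε
  obtain ⟨n, hn, ⟨u, v⟩, hz, hdz⟩ :=
    aux_backward_recurrent (Prod.map f f) hg hgs (x, y) (half_pos hε)
  have hun : f^[n] u = x := by
    have := congrArg Prod.fst hz
    simpa [Prod.map_iterate] using this
  have hvn : f^[n] v = y := by
    have := congrArg Prod.snd hz
    simpa [Prod.map_iterate] using this
  have hdu : dist u x < ε / 2 := lt_of_le_of_lt (le_max_left _ _ |>.trans_eq rfl)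
    (by simpa [Prod.dist_eq] using hdz) |>.trans_le le_rfl
  have hdv : dist v y < ε / 2 := lt_of_le_of_lt (le_max_right _ _ |>.trans_eq rfl)
    (by simpa [Prod.dist_eq] using hdz) |>.trans_le le_rfl
  -- d(x,y) = d(f^[n] u, f^[n] v) ≤ d(f u, f v) ≤ d(f x, f y) + ε
  obtain ⟨m, rfl⟩ : ∃ m, n = m + 1 := ⟨n - 1, by omega⟩
  have key : dist x y ≤ dist (f u) (f v) := by
    have := (hf.iterate m).dist_le_mul (f u) (f v)
    rw [← Function.iterate_succ_apply, ← Function.iterate_succ_apply, hun, hvn] at this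
    simpa using this
  calc dist x y ≤ dist (f u) (f v) := key
    _ ≤ dist (f u) (f x) + dist (f x) (f y) + dist (f y) (f v) := dist_triangle4 _ _ _ _
    _ ≤ dist u x + dist (f x) (f y) + dist v y := by
        gcongr
        · simpa using hf.dist_le_mul u x
        · simpa [dist_comm] using hf.dist_le_mul y v
    _ ≤ dist (f x) (f y) + ε := by linarith
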